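/- Let χ_S, χ_A, α, D_A, d, c > 0 and set λ₋ = (χ_S + χ_A − c)/d, λ₊ = (c − χ_S + χ_A)/d, μ₋ = (−c + √(c² + 4 α D_A))/(2 D_A) and μ₊ = (c + √(c² + 4 α D_A))/(2 D_A). Then μ₋ and μ₊ are positive, D_A μ₋² + c μ₋ − α = 0, D_A μ₊² − c μ₊ − α = 0, and the identity λ₋ μ₋ = λ₊ μ₊ holds if and only if (χ_S − c) √(c² + 4 α D_A) = χ_A c. -/
import Mathlib


open MeasureTheory Filter

/-- Properties of the exponential rates μ₋, μ₊ and equivalence of λ₋μ₋ = λ₊μ₊ with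
the implicit wave-speed relation. -/
theorem stmt_9 (χS χA α DA d c lm lp mm mp : ℝ)
    (hχS : 0 < χS) (hχA : 0 < χA) (hα : 0 < α) (hDA : 0 < DA) (hd : 0 < d) (hc : 0 < c)
    (hlm : lm = (χS + χA - c) / d) (hlp : lp = (c - χS + χA) / d)
    (hmm : mm = (-c + Real.sqrt (c ^ 2 + 4 * α * DA)) / (2 * DA))
    (hmp : mp = (c + Real.sqrt (c ^ 2 + 4 * α * DA)) / (2 * DA)) :
    0 < mm ∧ 0 < mp ∧
    DA * mm ^ 2 + c * mm - α = 0 ∧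
    DA * mp ^ 2 - c * mp - α = 0 ∧
    (lm * mm = lp * mp ↔ (χS - c) * Real.sqrt (c ^ 2 + 4 * α * DA) = χA * c) := by
  set s := Real.sqrt (c ^ 2 + 4 * α * DA) with hs
  have hpos : (0:ℝ) < c ^ 2 + 4 * α * DA := by positivity
  have hs2 : s ^ 2 = c ^ 2 + 4 * α * DA := Real.sq_sqrt hpos.le
  have hsge : 0 ≤ s := Real.sqrt_nonneg _
  have hsc : c < s := by nlinarith
  refine ⟨?_, ?_, ?_, ?_, ?_⟩
  · rw [hmm]; apply div_pos (by linarith) (by positivity)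
  · rw [hmp]; positivity
  · rw [hmm]; field_simp; nlinarith
  · rw [hmp]; field_simp; nlinarith
  · rw [hlm, hlp, hmm, hmp]
    rw [div_mul_div_comm, div_mul_div_comm, div_eq_div_iff (by positivity) (by positivity)]
    constructor
    · intro h
      have h' := mul_right_cancel₀ (by positivity : (0:ℝ) < d * (2 * DA)).ne' h
      linear_combination h' / 2
    · intro h; linear_combination (2 * (d * (2 * DA))) * h
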